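/- Let c > 0 and μ > 0 with μ ≠ 1, and define h : (0,∞) → ℝ by h(t) = ln(c t^μ) - ln(t) + t^{1-μ}/c - 1. Then h(t) = 0 implies t = c t^μ, i.e. t = c^{-1/(μ-1)}. -/

import Mathlib

theorem stmt11 (c μ : ℝ) (hc : 0 < c) (hμ : 0 < μ) (hμ1 : μ ≠ 1)
    (t : ℝ) (ht : 0 < t)
    (h0 : Real.log (c * t ^ μ) - Real.log t + t ^ (1 - μ) / c - 1 = 0) :
    c * t ^ μ = t ∧ t = c ^ (-(1 / (μ - 1))) := by
  set u : ℝ := t ^ (1 - μ) / c with hu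
  have hup : 0 < u := div_pos (Real.rpow_pos_of_pos ht _) hc
  have hlogu : Real.log u = (1 - μ) * Real.log t - Real.log c := by
    rw [hu, Real.log_div (ne_of_gt (Real.rpow_pos_of_pos ht _)) (ne_of_gt hc),
      Real.log_rpow ht]
  have h0' : Real.log u = u - 1 := by
    rw [Real.log_mul (ne_of_gt hc) (ne_of_gt (Real.rpow_pos_of_pos ht _)),
      Real.log_rpow ht] at h0
    rw [hlogu]; linarith
  have hu1 : u = 1 := by
    by_contra hne
    have h1 : u - 1 ≠ 0 := sub_ne_zero.mpr hne
    have h2 : (u - 1) + 1 < Real.exp (u - 1) := Real.add_one_lt_exp h1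
    rw [← h0', Real.exp_log hup] at h2
    linarith
  have hc' : t ^ (1 - μ) = c := by
    field_simp [hu] at hu1
    rw [hu, div_eq_one_iff_eq (ne_of_gt hc)] at hu1
    exact hu1
  have hct : c * t ^ μ = t := by
    rw [← hc', ← Real.rpow_add ht]
    simp
  refine ⟨hct, ?_⟩
  have hμ1' : μ - 1 ≠ 0 := sub_ne_zero.mpr hμ1
  rw [← hc', ← Real.rpow_mul (le_of_lt ht)]
  rw [show (1 - μ) * (-(1 / (μ - 1))) = 1 by field_simp; ring]
  simp [Real.rpow_one]
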